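/- Let p be an odd prime and N a natural number. If A is an N×N integer matrix such that A^p is the identity matrix and every entry of A − I is even (i.e., A is congruent to the identity matrix modulo 2), then A = I. -/

import Mathlib

open Finset

lemma pow_entry_dvd_aux {N : ℕ} (d : ℤ) (B : Matrix (Fin N) (Fin N) ℤ)
    (h : ∀ i j, d ∣ B i j) : ∀ n, ∀ i j, d ^ n ∣ (B ^ n) i j := by
  intro n
  induction n with
  | zero => intro i j; simp
  | succ n ih =>
    intro i j
    rw [pow_succ, pow_succ, Matrix.mul_apply]
    exact Finset.dvd_sum fun l _ => mul_dvd_mul (ih i l) (h l j)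

/-- The algebraic core of Lemma 4.1: an integer matrix of odd prime order `p`
which is congruent to the identity modulo 2 must be the identity. -/
theorem matrix_eq_one_of_pow_odd_prime_eq_one_of_mod_two_trivial
    (p : ℕ) (hp : p.Prime) (hodd : Odd p) (N : ℕ)
    (A : Matrix (Fin N) (Fin N) ℤ) (hA : A ^ p = 1)
    (hmod : ∀ i j, 2 ∣ (A - 1) i j) : A = 1 := by
  set B : Matrix (Fin N) (Fin N) ℤ := A - 1 with hB
  obtain ⟨q, hq⟩ : ∃ q, p = q + 3 := ⟨p - 3, by
    have h2 := hp.two_le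
    have : p ≠ 2 := by rintro rfl; exact (Nat.not_odd_iff_even.mpr (by norm_num)) hodd
    omega⟩
  have hAB : A = B + 1 := by rw [hB]; abel
  have hexp : ∑ m ∈ range (p + 1), ((p.choose m : ℤ)) • B ^ m = 1 := by
    have h1 := (Commute.one_right B).add_pow p
    simp only [one_pow, mul_one] at h1
    rw [← hA, hAB, h1]
    exact Finset.sum_congr rfl fun m _ => by
      rw [zsmul_eq_mul, Int.cast_natCast, (Nat.cast_commute (p.choose m) (B ^ m)).eq]
  have hent : ∀ i j, ∑ m ∈ range (p + 1), (p.choose m : ℤ) * (B ^ m) i j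
      = (1 : Matrix (Fin N) (Fin N) ℤ) i j := by
    intro i j
    have h2 := congrFun (congrFun hexp i) j
    simp only [Matrix.sum_apply, Matrix.smul_apply, smul_eq_mul] at h2
    exact h2
  -- key induction: all entries of B divisible by every power of 2
  have key : ∀ k : ℕ, ∀ i j, (2 : ℤ) ^ (k + 1) ∣ B i j := by
    intro k
    induction k with
    | zero => intro i j; simpa using hmod i j
    | succ k ih =>
      intro i j
      have hdvd2 : ∀ m, 2 ≤ m → (2 : ℤ) ^ (k + 2) ∣ (B ^ m) i j := by
        intro m hm
        have h3 := pow_entry_dvd_aux ((2 : ℤ) ^ (k + 1)) B ih m i j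
        refine dvd_trans (pow_dvd_pow (2 : ℤ) ?_) (by rwa [← pow_mul] at h3)
        nlinarith
      have h0 := hent i j
      rw [hq] at h0
      rw [show q + 3 + 1 = (q + 2) + 1 + 1 from rfl, Finset.sum_range_succ'] at h0
      rw [Finset.sum_range_succ'] at h0
      simp only [zero_add, pow_zero, pow_one, Nat.choose_zero_right, Nat.cast_one,
        one_mul] at h0
      have hrest : (2 : ℤ) ^ (k + 2) ∣
          ∑ m ∈ range (q + 2), ((q + 3).choose (m + 1 + 1) : ℤ) * (B ^ (m + 1 + 1)) i j :=
        Finset.dvd_sum fun m _ => Dvd.dvd.mul_left (hdvd2 (m + 1 + 1) (by omega)) _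
      have hpB : (2 : ℤ) ^ (k + 2) ∣ ((q + 3).choose 1 : ℤ) * B i j := by
        have heq : ((q + 3).choose 1 : ℤ) * B i j =
            -(∑ m ∈ range (q + 2), ((q + 3).choose (m + 1 + 1) : ℤ) * (B ^ (m + 1 + 1)) i j) := by
          linarith [h0]
        rw [heq]
        exact hrest.neg_right
      rw [Nat.choose_one_right] at hpB
      have hnd : ¬ (2 : ℤ) ∣ ((q + 3 : ℕ) : ℤ) := by
        rw [show (2 : ℤ) = ((2 : ℕ) : ℤ) from rfl, Int.natCast_dvd_natCast]
        intro hdvd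
        rw [← hq] at hdvd
        obtain ⟨c, hc⟩ := hodd
        omega
      have hcop : IsCoprime ((2 : ℤ) ^ (k + 2)) ((q + 3 : ℕ) : ℤ) :=
        IsCoprime.pow_left ((Int.prime_two.coprime_iff_not_dvd).mpr hnd)
      exact hcop.dvd_of_dvd_mul_left hpB
  -- conclude each entry is zero
  have hzero : ∀ i j, B i j = 0 := by
    intro i j
    by_contra h
    have h1 : (2 : ℤ) ^ ((B i j).natAbs + 1) ≤ |B i j| :=
      Int.le_of_dvd (abs_pos.mpr h) ((dvd_abs _ _).mpr (key (B i j).natAbs i j))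
    have h2 : (B i j).natAbs < 2 ^ ((B i j).natAbs + 1) :=
      lt_of_lt_of_le (Nat.lt_two_pow_self (n := (B i j).natAbs)) (Nat.pow_le_pow_right (by norm_num) (by omega))
    have h3 : |B i j| < (2 : ℤ) ^ ((B i j).natAbs + 1) := by
      rw [Int.abs_eq_natAbs]
      exact_mod_cast h2
    linarith
  have hBzero : B = 0 := by ext i j; exact hzero i j
  rw [hB] at hBzero
  rw [sub_eq_zero] at hBzero
  exact hBzero
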